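/- Let X be a full-support multivariate Bernoulli vector in {0,1}^d and G : {0,1}^d → ℝ any function. Then there exists a unique vector β = (β_A)_{A⊆D} ∈ ℝ^(2^d) such that G(X) = ∑_{A⊆D} β_A e_A(X_A) almost surely, and β satisfies Γβ = μ where Γ_{A,B} := E[e_A(X_A) e_B(X_B)] and μ_A := E[e_A(X_A) G(X)]. -/

import Mathlib

open Finset

noncomputable section

/-- Marginal probability `P(X_A = x_A)` for a mass function `p` on `{0,1}^d`. -/
def margProb {d : ℕ} (p : (Fin d → Bool) → ℝ) (A : Finset (Fin d)) (x : Fin d → Bool) : ℝ :=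
  ∑ y ∈ univ.filter (fun y : Fin d → Bool => ∀ i ∈ A, y i = x i), p y

/-- The family `e_A(x_A) = (-1)^(∑_{j∈A} x_j) / P(X_A = x_A)`. -/
def eFun {d : ℕ} (p : (Fin d → Bool) → ℝ) (A : Finset (Fin d)) (x : Fin d → Bool) : ℝ :=
  (-1 : ℝ) ^ (∑ j ∈ A, if x j then (1 : ℕ) else 0) / margProb p A x

/-- Expectation of `f(X)` under the mass function `p`. -/
def expec {d : ℕ} (p : (Fin d → Bool) → ℝ) (f : (Fin d → Bool) → ℝ) : ℝ :=
  ∑ x, p x * f x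

namespace MBH

variable {d : ℕ}

def chi (A : Finset (Fin d)) (x : Fin d → Bool) : ℝ :=
  (-1 : ℝ) ^ (∑ j ∈ A, if x j then (1 : ℕ) else 0)

lemma eFun_eq (p : (Fin d → Bool) → ℝ) (A : Finset (Fin d)) (x : Fin d → Bool) :
    eFun p A x = chi A x / margProb p A x := rfl

lemma chi_sq (A : Finset (Fin d)) (x : Fin d → Bool) : chi A x * chi A x = 1 := by
  unfold chi
  rw [← pow_add]
  exact Even.neg_one_pow ⟨_, rfl⟩

lemma margProb_pos (p : (Fin d → Bool) → ℝ) (hpos : ∀ x, 0 < p x)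
    (A : Finset (Fin d)) (x : Fin d → Bool) : 0 < margProb p A x := by
  apply Finset.sum_pos (fun y _ => hpos y)
  exact ⟨x, by simp⟩

lemma margProb_congr (p : (Fin d → Bool) → ℝ) (A : Finset (Fin d)) {x x' : Fin d → Bool}
    (h : ∀ i ∈ A, x' i = x i) : margProb p A x' = margProb p A x := by
  unfold margProb
  congr 1
  apply Finset.filter_congr
  intro y _
  constructor
  · intro hy i hi; rw [hy i hi, h i hi]
  · intro hy i hi; rw [hy i hi, ← h i hi]

lemma chi_update_not_mem {A : Finset (Fin d)} {j : Fin d} (hj : j ∉ A)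
    (x : Fin d → Bool) (b : Bool) : chi A (Function.update x j b) = chi A x := by
  unfold chi
  congr 1
  apply Finset.sum_congr rfl
  intro i hi
  rw [Function.update_of_ne (by rintro rfl; exact hj hi) ]

lemma chi_update_mem {A : Finset (Fin d)} {j : Fin d} (hj : j ∈ A)
    (x : Fin d → Bool) : chi A (Function.update x j (!x j)) = - chi A x := by
  unfold chi
  rw [← Finset.add_sum_erase _ _ hj, ← Finset.add_sum_erase _ (fun i => if x i then (1:ℕ) else 0) hj]
  have h2 : ∀ i ∈ A.erase j,
      (if Function.update x j (!x j) i then (1:ℕ) else 0) = if x i then 1 else 0 := by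
    intro i hi
    rw [Function.update_of_ne (Finset.ne_of_mem_erase hi)]
  rw [Finset.sum_congr rfl h2, Function.update_self]
  cases hx : x j <;> simp [pow_succ, pow_add]

/-- flip at coordinate j as an involution -/
def flip (j : Fin d) (x : Fin d → Bool) : Fin d → Bool := Function.update x j (!x j)

lemma flip_involutive (j : Fin d) : Function.Involutive (flip (d := d) j) := by
  intro x
  unfold flip
  funext i
  by_cases h : i = j
  · subst h; simp
  · simp [Function.update_of_ne h]

lemma orth (p : (Fin d → Bool) → ℝ) {A B : Finset (Fin d)} (hAB : ¬ A ⊆ B) :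
    ∑ x, chi A x * eFun p B x = 0 := by
  obtain ⟨j, hjA, hjB⟩ := Finset.not_subset.mp hAB
  set f : (Fin d → Bool) → ℝ := fun x => chi A x * eFun p B x with hf
  have key : ∀ x, f (flip j x) = - f x := by
    intro x
    have h1 : chi A (flip j x) = - chi A x := chi_update_mem hjA x
    have h2 : eFun p B (flip j x) = eFun p B x := by
      show chi B (Function.update x j (!x j)) / _ = _
      rw [chi_update_not_mem hjB,
        margProb_congr p B (x' := flip j x) (fun i hi => by
          exact Function.update_of_ne (by rintro rfl; exact hjB hi) _ _)]
      rfl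
    rw [hf]
    simp only [h1, h2]
    ring
  have hS : ∑ x, f x = ∑ x, f (flip j x) :=
    (Fintype.sum_equiv ((flip_involutive j).toPerm _) _ _ (fun x => rfl)).symm
  have : ∑ x, f x = - ∑ x, f x :=
    calc ∑ x, f x = ∑ x, f (flip j x) := hS
      _ = ∑ x, -f x := Finset.sum_congr rfl fun x _ => key x
      _ = - ∑ x, f x := Finset.sum_neg_distrib _
  linarith

lemma diag (p : (Fin d → Bool) → ℝ) (hpos : ∀ x, 0 < p x) (A : Finset (Fin d)) :
    0 < ∑ x, chi A x * eFun p A x := by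
  apply Finset.sum_pos
  · intro x _
    rw [eFun_eq, mul_div_assoc', chi_sq]
    exact div_pos one_pos (margProb_pos p hpos A x)
  · exact univ_nonempty

lemma indep (p : (Fin d → Bool) → ℝ) (hpos : ∀ x, 0 < p x) (β : Finset (Fin d) → ℝ)
    (h : ∀ x, ∑ A : Finset (Fin d), β A * eFun p A x = 0) : β = 0 := by
  by_contra hβ
  have hne : (univ.filter fun A : Finset (Fin d) => β A ≠ 0).Nonempty := by
    rcases Function.ne_iff.mp hβ with ⟨A, hA⟩
    exact ⟨A, Finset.mem_filter.mpr ⟨Finset.mem_univ A, by simpa using hA⟩⟩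
  obtain ⟨A, hAs, hAmax⟩ := Finset.exists_max_image _ (fun A => A.card) hne
  have hAne : β A ≠ 0 := (Finset.mem_filter.mp hAs).2
  have key : ∑ B : Finset (Fin d), β B * ∑ x, chi A x * eFun p B x = 0 := by
    calc ∑ B : Finset (Fin d), β B * ∑ x, chi A x * eFun p B x
        = ∑ B : Finset (Fin d), ∑ x, chi A x * (β B * eFun p B x) := by
          refine Finset.sum_congr rfl fun B _ => ?_
          rw [Finset.mul_sum]
          exact Finset.sum_congr rfl fun x _ => by ring
      _ = ∑ x, ∑ B : Finset (Fin d), chi A x * (β B * eFun p B x) := Finset.sum_comm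
      _ = ∑ x, chi A x * ∑ B : Finset (Fin d), β B * eFun p B x := by
          exact Finset.sum_congr rfl fun x _ => (Finset.mul_sum _ _ _).symm
      _ = 0 := by simp [h]
  have : ∑ B : Finset (Fin d), β B * ∑ x, chi A x * eFun p B x
      = β A * ∑ x, chi A x * eFun p A x := by
    apply Finset.sum_eq_single
    · intro B _ hBA
      by_cases hB : β B = 0
      · rw [hB, zero_mul]
      · have hBs : B ∈ univ.filter fun A : Finset (Fin d) => β A ≠ 0 := by simp [hB]
        have hcard := hAmax B hBs
        have : ¬ A ⊆ B := by
          intro hsub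
          exact hBA (Finset.eq_of_subset_of_card_le hsub hcard).symm
        rw [orth p this, mul_zero]
    · intro h; exact absurd (Finset.mem_univ A) h
  rw [this] at key
  exact hAne (by
    have := diag p hpos A
    rcases mul_eq_zero.mp key with h' | h'
    · exact h'
    · exact absurd h' (ne_of_gt this))

def T (p : (Fin d → Bool) → ℝ) : (Finset (Fin d) → ℝ) →ₗ[ℝ] ((Fin d → Bool) → ℝ) where
  toFun β := fun x => ∑ A : Finset (Fin d), β A * eFun p A x
  map_add' β γ := by
    funext x
    simp [add_mul, Finset.sum_add_distrib]
  map_smul' c β := by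
    funext x
    simp [Finset.mul_sum, mul_assoc]

lemma T_injective (p : (Fin d → Bool) → ℝ) (hpos : ∀ x, 0 < p x) :
    Function.Injective (T p) := by
  rw [injective_iff_map_eq_zero]
  intro β hβ
  exact indep p hpos β fun x => congrFun hβ x

lemma T_surjective (p : (Fin d → Bool) → ℝ) (hpos : ∀ x, 0 < p x) :
    Function.Surjective (T p) := by
  refine (LinearMap.injective_iff_surjective_of_finrank_eq_finrank ?_).mp (T_injective p hpos)
  simp [Module.finrank_fintype_fun_eq_card]

end MBH

/-- Multivariate Bernoulli Hoeffding decomposition: for any `G : {0,1}^d → ℝ` there is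
a unique vector `β` with `G(X) = ∑_A β_A e_A(X_A)`, and `β` satisfies `Γ β = μ`
where `Γ_{A,B} = E[e_A e_B]` and `μ_A = E[e_A G]`. -/
theorem multivariate_bernoulli_hoeffding {d : ℕ}
    (p : (Fin d → Bool) → ℝ) (hpos : ∀ x, 0 < p x) (hsum : ∑ x, p x = 1)
    (G : (Fin d → Bool) → ℝ) :
    ∃! β : Finset (Fin d) → ℝ,
      (∀ x, G x = ∑ A : Finset (Fin d), β A * eFun p A x) ∧
      (∀ A : Finset (Fin d),
        ∑ B : Finset (Fin d), expec p (fun x => eFun p A x * eFun p B x) * β B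
          = expec p (fun x => eFun p A x * G x)) := by
  obtain ⟨β, hβ⟩ := MBH.T_surjective p hpos G
  have hrep : ∀ x, G x = ∑ A : Finset (Fin d), β A * eFun p A x :=
    fun x => (congrFun hβ x).symm
  refine ⟨β, ⟨hrep, ?_⟩, ?_⟩
  · intro A
    unfold expec
    calc ∑ B : Finset (Fin d), (∑ x, p x * (eFun p A x * eFun p B x)) * β B
        = ∑ B : Finset (Fin d), ∑ x, p x * (eFun p A x * (β B * eFun p B x)) := by
          refine Finset.sum_congr rfl fun B _ => ?_
          rw [Finset.sum_mul]
          exact Finset.sum_congr rfl fun x _ => by ring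
      _ = ∑ x, ∑ B : Finset (Fin d), p x * (eFun p A x * (β B * eFun p B x)) :=
          Finset.sum_comm
      _ = ∑ x, p x * (eFun p A x * G x) := by
          refine Finset.sum_congr rfl fun x _ => ?_
          rw [hrep x, Finset.mul_sum, Finset.mul_sum]
  · intro γ ⟨h1, _⟩
    apply MBH.T_injective p hpos
    funext x
    exact (h1 x).symm.trans (hrep x)
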